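/- In the polynomial ring R = ℚ[x11, x22, x21, x12, x23, x13, x14, x24], the ideal Q1 generated by the six 2×2 minors of the generic 2×4 matrix with rows (x11, x12, x13, x14) and (x21, x22, x23, x24) is a prime ideal. -/

import Mathlib

open MvPolynomial

noncomputable section

abbrev R : Type := MvPolynomial (Fin 8) ℚ

def x11 : R := X 0
def x22 : R := X 1
def x21 : R := X 2
def x12 : R := X 3
def x23 : R := X 4
def x13 : R := X 5
def x14 : R := X 6
def x24 : R := X 7

def I : Ideal R :=
  Ideal.span {x11 * x22 - x21 * x12, x12 * x23 - x22 * x13, x13 * x24 - x23 * x14}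

def Q1 : Ideal R :=
  Ideal.span {x23 * x14 - x13 * x24, x21 * x14 - x11 * x24, x22 * x14 - x12 * x24,
    x12 * x23 - x22 * x13, x11 * x23 - x21 * x13, x11 * x22 - x21 * x12}

def Q2 : Ideal R := Ideal.span {x13, x23, x11 * x22 - x21 * x12}

def Q3 : Ideal R := Ideal.span {x12, x22, x23 * x14 - x13 * x24}

abbrev T : Type := MvPolynomial (Fin 6) ℚ

/-- exponent vector in the target for each source variable -/
def σv : Fin 8 → (Fin 6 →₀ ℕ) :=
  ![Finsupp.single 0 1 + Finsupp.single 2 1,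
    Finsupp.single 1 1 + Finsupp.single 3 1,
    Finsupp.single 1 1 + Finsupp.single 2 1,
    Finsupp.single 0 1 + Finsupp.single 3 1,
    Finsupp.single 1 1 + Finsupp.single 4 1,
    Finsupp.single 0 1 + Finsupp.single 4 1,
    Finsupp.single 0 1 + Finsupp.single 5 1,
    Finsupp.single 1 1 + Finsupp.single 5 1]

lemma σv_0 : σv 0 = Finsupp.single 0 1 + Finsupp.single 2 1 := rfl
lemma σv_1 : σv 1 = Finsupp.single 1 1 + Finsupp.single 3 1 := rfl
lemma σv_2 : σv 2 = Finsupp.single 1 1 + Finsupp.single 2 1 := rfl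
lemma σv_3 : σv 3 = Finsupp.single 0 1 + Finsupp.single 3 1 := rfl
lemma σv_4 : σv 4 = Finsupp.single 1 1 + Finsupp.single 4 1 := rfl
lemma σv_5 : σv 5 = Finsupp.single 0 1 + Finsupp.single 4 1 := rfl
lemma σv_6 : σv 6 = Finsupp.single 0 1 + Finsupp.single 5 1 := rfl
lemma σv_7 : σv 7 = Finsupp.single 1 1 + Finsupp.single 5 1 := rfl

def φ : R →ₐ[ℚ] T := aeval fun i => monomial (σv i) 1

lemma phi_X (i : Fin 8) : φ (X i) = monomial (σv i) 1 := aeval_X _ i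

lemma Q1_le_ker : Q1 ≤ RingHom.ker φ.toRingHom := by
  rw [Q1, Ideal.span_le]
  intro p hp
  simp only [Set.mem_insert_iff, Set.mem_singleton_iff] at hp
  have key : ∀ i j k l : Fin 8, σv i + σv j = σv k + σv l →
      ((X i * X j - X k * X l : R) ∈ RingHom.ker φ.toRingHom) := by
    intro i j k l h
    simp only [RingHom.mem_ker, AlgHom.toRingHom_eq_coe, RingHom.coe_coe,
      map_sub, map_mul, phi_X, monomial_mul, mul_one, h, sub_self]
  rcases hp with h|h|h|h|h|h <;> subst h <;>
    simp only [x11, x12, x13, x14, x21, x22, x23, x24] <;>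
    apply key <;>
    simp only [σv_0, σv_1, σv_2, σv_3, σv_4, σv_5, σv_6, σv_7] <;> abel

/-- image of an exponent vector under the monomial map -/
def μ (m : Fin 8 →₀ ℕ) : Fin 6 →₀ ℕ := ∑ i : Fin 8, m i • σv i

lemma phi_monomial (m : Fin 8 →₀ ℕ) (c : ℚ) : φ (monomial m c) = monomial (μ m) c := by
  rw [φ, aeval_monomial, μ]
  have h1 : (m.prod fun i e => (monomial (σv i) (1:ℚ))^e)
      = monomial (∑ i : Fin 8, m i • σv i) 1 := by
    rw [Finsupp.prod_fintype]
    · induction (Finset.univ : Finset (Fin 8)) using Finset.induction with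
      | empty => simp
      | insert _ _ hx ih =>
          rw [Finset.prod_insert hx, Finset.sum_insert hx, ih, monomial_pow, one_pow,
            monomial_mul, one_mul]
    · intro i; exact pow_zero _
  rw [h1, algebraMap_eq, C_mul_monomial, mul_one]

lemma mu_apply (m : Fin 8 →₀ ℕ) :
    μ m 0 = m 0 + m 3 + m 5 + m 6 ∧ μ m 1 = m 1 + m 2 + m 4 + m 7 ∧
    μ m 2 = m 0 + m 2 ∧ μ m 3 = m 1 + m 3 ∧ μ m 4 = m 4 + m 5 ∧ μ m 5 = m 6 + m 7 := by
  refine ⟨?_, ?_, ?_, ?_, ?_, ?_⟩ <;>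
  · rw [μ, Finset.sum_apply']
    simp [Fin.sum_univ_eight, σv_0, σv_1, σv_2, σv_3,
      σv_4, σv_5, σv_6, σv_7, Finsupp.single_apply]
    try omega

def NF (m : Fin 8 →₀ ℕ) : Prop :=
  (m 3 = 0 ∨ m 2 = 0) ∧ (m 5 = 0 ∨ m 2 = 0) ∧ (m 6 = 0 ∨ m 2 = 0) ∧
  (m 5 = 0 ∨ m 1 = 0) ∧ (m 6 = 0 ∨ m 1 = 0) ∧ (m 6 = 0 ∨ m 4 = 0)

set_option maxHeartbeats 1600000 in
lemma grp3 {x y z w : ℕ} (h1 : y = 0 ∨ x = 0) (h2 : z = 0 ∨ x = 0) (h3 : w = 0 ∨ x = 0) :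
    x = 0 ∨ (y = 0 ∧ z = 0 ∧ w = 0) := by tauto

lemma grp2 {x y z : ℕ} (h1 : y = 0 ∨ x = 0) (h2 : z = 0 ∨ x = 0) :
    x = 0 ∨ (y = 0 ∧ z = 0) := by tauto

set_option maxHeartbeats 1000000 in
lemma mu_injOn_normal {m m' : Fin 8 →₀ ℕ} (hm : NF m) (hm' : NF m')
    (h : μ m = μ m') : m = m' := by
  obtain ⟨c0, c1, c2, c3, c4, c5⟩ := mu_apply m
  obtain ⟨d0, d1, d2, d3, d4, d5⟩ := mu_apply m'
  rw [h] at c0 c1 c2 c3 c4 c5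
  have E0 := c0.symm.trans d0
  have E1 := c1.symm.trans d1
  have E2 := c2.symm.trans d2
  have E3 := c3.symm.trans d3
  have E4 := c4.symm.trans d4
  have E5 := c5.symm.trans d5
  clear c0 c1 c2 c3 c4 c5 d0 d1 d2 d3 d4 d5 h
  obtain ⟨a1, a2, a3, a4, a5, a6⟩ := hm
  obtain ⟨b1, b2, b3, b4, b5, b6⟩ := hm'
  have A1 := grp3 a1 a2 a3
  have A2 := grp2 a4 a5
  have A3 := a6.symm
  have B1 := grp3 b1 b2 b3
  have B2 := grp2 b4 b5
  have B3 := b6.symm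
  clear a1 a2 a3 a4 a5 a6 b1 b2 b3 b4 b5 b6
  have key : m 0 = m' 0 ∧ m 1 = m' 1 ∧ m 2 = m' 2 ∧ m 3 = m' 3 ∧ m 4 = m' 4 ∧
      m 5 = m' 5 ∧ m 6 = m' 6 ∧ m 7 = m' 7 := by omega
  ext i
  fin_cases i
  · exact key.1
  · exact key.2.1
  · exact key.2.2.1
  · exact key.2.2.2.1
  · exact key.2.2.2.2.1
  · exact key.2.2.2.2.2.1
  · exact key.2.2.2.2.2.2.1
  · exact key.2.2.2.2.2.2.2
/-- weight used for the straightening induction -/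
def wt (m : Fin 8 →₀ ℕ) : ℕ := m 3 + 2 * m 5 + 3 * m 6

/-- the six generators, as membership facts -/
lemma gen_mem_01 : (X 3 * X 2 - X 0 * X 1 : R) ∈ Q1 := by
  have h : (X 0 * X 1 - X 2 * X 3 : R) ∈ Q1 := by
    apply Ideal.subset_span; simp [x11, x22, x21, x12]
  have := Q1.neg_mem h
  convert this using 1; ring

lemma gen_mem_02 : (X 5 * X 2 - X 0 * X 4 : R) ∈ Q1 := by
  have h : (X 0 * X 4 - X 2 * X 5 : R) ∈ Q1 := by
    apply Ideal.subset_span; simp [x11, x23, x21, x13]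
  have := Q1.neg_mem h
  convert this using 1; ring

lemma gen_mem_03 : (X 6 * X 2 - X 0 * X 7 : R) ∈ Q1 := by
  have h : (X 2 * X 6 - X 0 * X 7 : R) ∈ Q1 := by
    apply Ideal.subset_span; simp [x21, x14, x11, x24]
  convert h using 1; ring

lemma gen_mem_12 : (X 5 * X 1 - X 3 * X 4 : R) ∈ Q1 := by
  have h : (X 3 * X 4 - X 1 * X 5 : R) ∈ Q1 := by
    apply Ideal.subset_span; simp [x12, x23, x22, x13]
  have := Q1.neg_mem h
  convert this using 1; ring

lemma gen_mem_13 : (X 6 * X 1 - X 3 * X 7 : R) ∈ Q1 := by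
  have h : (X 1 * X 6 - X 3 * X 7 : R) ∈ Q1 := by
    apply Ideal.subset_span; simp [x22, x14, x12, x24]
  convert h using 1; ring

lemma gen_mem_23 : (X 6 * X 4 - X 5 * X 7 : R) ∈ Q1 := by
  have h : (X 4 * X 6 - X 5 * X 7 : R) ∈ Q1 := by
    apply Ideal.subset_span; simp [x23, x14, x13, x24]
  convert h using 1; ring

lemma monomial_sub_mem (d : Fin 8 →₀ ℕ) (c : ℚ) {i j k l : Fin 8}
    (hg : (X i * X j - X k * X l : R) ∈ Q1) :
    (monomial (d + Finsupp.single i 1 + Finsupp.single j 1) c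
      - monomial (d + Finsupp.single k 1 + Finsupp.single l 1) c : R) ∈ Q1 := by
  have key : (monomial (d + Finsupp.single i 1 + Finsupp.single j 1) c
      - monomial (d + Finsupp.single k 1 + Finsupp.single l 1) c : R)
      = monomial d c * (X i * X j - X k * X l) := by
    rw [mul_sub]
    simp only [X, monomial_mul, mul_one]
    rw [← add_assoc, ← add_assoc]
  rw [key]
  exact Ideal.mul_mem_left _ _ hg


/-- span of the normal monomials -/
def Msub : Submodule ℚ R := Submodule.span ℚ {p : R | ∃ m, NF m ∧ p = monomial m 1}

/-- sum of `Q1` and the span of normal monomials -/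
def S : Submodule ℚ R := (Q1.restrictScalars ℚ) ⊔ Msub

lemma step {n : ℕ} (ih : ∀ k, k < n → ∀ m : Fin 8 →₀ ℕ, wt m = k → ∀ c : ℚ,
      (monomial m c : R) ∈ S)
    (m : Fin 8 →₀ ℕ) (c : ℚ) {i j k l : Fin 8} (hij : i ≠ j)
    (hi : m i ≠ 0) (hj : m j ≠ 0) (hg : (X i * X j - X k * X l : R) ∈ Q1)
    (hwt : wt (m - Finsupp.single i 1 - Finsupp.single j 1
      + Finsupp.single k 1 + Finsupp.single l 1) < n) :
    (monomial m c : R) ∈ S := by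
  set d : Fin 8 →₀ ℕ := m - Finsupp.single i 1 - Finsupp.single j 1 with hd
  have hm : m = d + Finsupp.single i 1 + Finsupp.single j 1 := by
    ext t
    simp only [hd, Finsupp.add_apply, Finsupp.tsub_apply, Finsupp.single_apply]
    have : (i = t → ¬ j = t) := fun h1 h2 => hij (h1.trans h2.symm)
    split_ifs with h1 h2 h2 <;>
      first
        | omega
        | (exfalso; exact this h1 h2)
        | (have hi' : m i ≠ 0 := hi; have hj' : m j ≠ 0 := hj;
           subst h1; omega)
        | (subst h2; omega)
  have hmem1 : (monomial (d + Finsupp.single i 1 + Finsupp.single j 1) c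
      - monomial (d + Finsupp.single k 1 + Finsupp.single l 1) c : R) ∈ S := by
    apply Submodule.mem_sup_left
    exact monomial_sub_mem d c hg
  have hmem2 : (monomial (d + Finsupp.single k 1 + Finsupp.single l 1) c : R) ∈ S := by
    apply ih _ hwt _ _ c
    congr 1
  have := S.add_mem hmem1 hmem2
  rw [sub_add_cancel, ← hm] at this
  exact this

set_option maxHeartbeats 1000000 in
lemma monomial_mem (n : ℕ) : ∀ m : Fin 8 →₀ ℕ, wt m = n → ∀ c : ℚ, (monomial m c : R) ∈ S := by
  induction n using Nat.strong_induction_on with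
  | _ n ih =>
    intro m hw c
    by_cases h1 : m 3 = 0 ∨ m 2 = 0
    · by_cases h2 : m 5 = 0 ∨ m 2 = 0
      · by_cases h3 : m 6 = 0 ∨ m 2 = 0
        · by_cases h4 : m 5 = 0 ∨ m 1 = 0
          · by_cases h5 : m 6 = 0 ∨ m 1 = 0
            · by_cases h6 : m 6 = 0 ∨ m 4 = 0
              · have hNF : NF m := ⟨h1, h2, h3, h4, h5, h6⟩
                apply Submodule.mem_sup_right
                have hc : (monomial m c : R) = c • monomial m 1 := by
                  rw [smul_monomial, smul_eq_mul, mul_one]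
                rw [hc]
                exact Submodule.smul_mem _ _ (Submodule.subset_span ⟨m, hNF, rfl⟩)
              · push_neg at h6
                refine step ih m c (by decide) h6.1 h6.2 gen_mem_23 ?_
                subst hw
                have h6' := h6.1
                simp [wt, Finsupp.add_apply, Finsupp.tsub_apply, Finsupp.single_apply]
                omega
            · push_neg at h5
              refine step ih m c (by decide) h5.1 h5.2 gen_mem_13 ?_
              subst hw
              have h5' := h5.1
              simp [wt, Finsupp.add_apply, Finsupp.tsub_apply, Finsupp.single_apply]
              omega
          · push_neg at h4
            refine step ih m c (by decide) h4.1 h4.2 gen_mem_12 ?_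
            subst hw
            have h4' := h4.1
            simp [wt, Finsupp.add_apply, Finsupp.tsub_apply, Finsupp.single_apply]
            omega
        · push_neg at h3
          refine step ih m c (by decide) h3.1 h3.2 gen_mem_03 ?_
          subst hw
          have h3' := h3.1
          simp [wt, Finsupp.add_apply, Finsupp.tsub_apply, Finsupp.single_apply]
          omega
      · push_neg at h2
        refine step ih m c (by decide) h2.1 h2.2 gen_mem_02 ?_
        subst hw
        have h2' := h2.1
        simp [wt, Finsupp.add_apply, Finsupp.tsub_apply, Finsupp.single_apply]
        omega
    · push_neg at h1
      refine step ih m c (by decide) h1.1 h1.2 gen_mem_01 ?_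
      subst hw
      have h1' := h1.1
      simp [wt, Finsupp.add_apply, Finsupp.tsub_apply, Finsupp.single_apply]
      omega

lemma all_mem_S (f : R) : f ∈ S := by
  rw [f.as_sum]
  exact Submodule.sum_mem _ fun m _ => monomial_mem (wt m) m rfl _

lemma Msub_support {p : R} (hp : p ∈ Msub) : ∀ m ∈ p.support, NF m := by
  induction hp using Submodule.span_induction with
  | mem q hq =>
      obtain ⟨m, hm, rfl⟩ := hq
      intro m' hm'
      rw [support_monomial] at hm'
      simp only [if_neg one_ne_zero, Finset.mem_singleton] at hm'
      rwa [hm']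
  | zero => simp
  | add q r _ _ hq hr =>
      intro m hm
      rcases Finset.mem_union.mp (MvPolynomial.support_add hm) with h | h
      exacts [hq m h, hr m h]
  | smul c q _ hq =>
      intro m hm
      exact hq m (Finsupp.support_smul hm)

lemma Msub_inj {p : R} (hp : p ∈ Msub) (h0 : φ p = 0) : p = 0 := by
  have hsupp := Msub_support hp
  rw [← support_eq_empty]
  by_contra hne
  obtain ⟨d, hd⟩ := Finset.nonempty_iff_ne_empty.mpr hne
  have hφ : φ p = ∑ m ∈ p.support, monomial (μ m) (coeff m p) := by
    conv_lhs => rw [p.as_sum]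
    rw [map_sum]
    simp_rw [phi_monomial]
  rw [h0] at hφ
  have hcoeff := congrArg (coeff (μ d)) hφ
  rw [coeff_zero, coeff_sum] at hcoeff
  rw [Finset.sum_eq_single d] at hcoeff
  · rw [coeff_monomial, if_pos rfl] at hcoeff
    exact mem_support_iff.mp hd hcoeff.symm
  · intro m hm hmd
    rw [coeff_monomial, if_neg]
    intro hmu
    exact hmd (mu_injOn_normal (hsupp m hm) (hsupp d hd) hmu)
  · intro h
    exact absurd hd h

lemma ker_le_Q1 : RingHom.ker φ.toRingHom ≤ Q1 := by
  intro f hf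
  obtain ⟨q, hq, g, hg, hqg⟩ := Submodule.mem_sup.mp (all_mem_S f)
  have hq1 : q ∈ Q1 := hq
  have hφq : φ q = 0 := Q1_le_ker hq1
  have hφf : φ f = 0 := hf
  have hφg : φ g = 0 := by
    have : φ q + φ g = φ f := by rw [← map_add, hqg]
    rw [hφq, hφf, zero_add] at this
    exact this
  have hg0 : g = 0 := Msub_inj hg hφg
  rw [← hqg, hg0, add_zero]
  exact hq1

theorem Q1_isPrime : Q1.IsPrime := by
  have h : Q1 = RingHom.ker φ.toRingHom := le_antisymm Q1_le_ker ker_le_Q1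
  rw [h]
  exact RingHom.ker_isPrime _

end
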